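/- Let F be a field, a ∈ F an element of multiplicative order ℓ (a^ℓ = 1 and a^j ≠ 1 for all 0 < j < ℓ), s, t natural numbers with t < s, x : Fin s → F such that the map (i,j) ↦ a^j · (x i) from Fin s × Fin ℓ to F is injective, and q ∈ F with (x i)^ℓ ≠ q^ℓ for all i. Then the following two subsets of (Fin s → F) are equal: { v | ∃ f ∈ F[X], natDegree(f) ≤ t·ℓ and f(a^j · x i) / ((x i)^ℓ − q^ℓ)^t = v i for all i ∈ Fin s, j ∈ Fin ℓ } = { v | ∃ g ∈ F[X], natDegree(g) ≤ t and v i = g((x i)^ℓ) / ((x i)^ℓ − q^ℓ)^t for all i ∈ Fin s }. -/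
import Mathlib


open Polynomial

lemma invGRS_aux_order {F : Type*} [Field F] {a : F} {ℓ : ℕ} (hℓ : 0 < ℓ) (ha1 : a ^ ℓ = 1)
    (ha2 : ∀ j : ℕ, 0 < j → j < ℓ → a ^ j ≠ 1) : orderOf a = ℓ := by
  have hdvd : orderOf a ∣ ℓ := orderOf_dvd_of_pow_eq_one ha1
  have hne : orderOf a ≠ 0 := by
    intro h
    rw [h, zero_dvd_iff] at hdvd
    omega
  rcases lt_or_eq_of_le (Nat.le_of_dvd hℓ hdvd) with h | h
  · exact absurd (pow_orderOf_eq_one a) (ha2 _ (Nat.pos_of_ne_zero hne) h)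
  · exact h

lemma invGRS_aux_char {F : Type*} [Field F] {a : F} {ℓ : ℕ} (hℓ : 0 < ℓ) (ha1 : a ^ ℓ = 1)
    (ha2 : ∀ j : ℕ, 0 < j → j < ℓ → a ^ j ≠ 1) : (ℓ : F) ≠ 0 := by
  intro h
  rcases CharP.char_is_prime_or_zero F (ringChar F) with hprime | hzero
  · haveI : Fact (ringChar F).Prime := ⟨hprime⟩
    obtain ⟨m, hm⟩ := (CharP.cast_eq_zero_iff F (ringChar F) ℓ).mp h
    have hp2 : 2 ≤ ringChar F := hprime.two_le
    have hm0 : 0 < m := by nlinarith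
    have hmℓ : m < ℓ := by nlinarith
    have key : (a ^ m - 1) ^ ringChar F = 0 := by
      rw [sub_pow_char, one_pow, ← pow_mul, mul_comm, ← hm, ha1, sub_self]
    have : a ^ m = 1 := by
      have h2 := pow_eq_zero_iff (n := ringChar F) (by omega) |>.mp key
      have := sub_eq_zero.mp h2
      simpa using this
    exact ha2 m hm0 hmℓ this
  · have := CharP.cast_eq_zero_iff F (ringChar F) ℓ |>.mp h
    rw [hzero, zero_dvd_iff] at this
    omega

lemma invGRS_aux_geom {F : Type*} [Field F] {a : F} {ℓ : ℕ} (hℓ : 0 < ℓ) (ha1 : a ^ ℓ = 1)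
    (ha2 : ∀ j : ℕ, 0 < j → j < ℓ → a ^ j ≠ 1) (m : ℕ) :
    (∑ j ∈ Finset.range ℓ, (a ^ m) ^ j) = if ℓ ∣ m then (ℓ : F) else 0 := by
  have hord : orderOf a = ℓ := invGRS_aux_order hℓ ha1 ha2
  by_cases hd : ℓ ∣ m
  · have : a ^ m = 1 := by
      rw [← hord] at hd
      exact orderOf_dvd_iff_pow_eq_one.mp hd
    simp [this, hd]
  · have hne : a ^ m ≠ 1 := fun h1 => hd (hord ▸ orderOf_dvd_of_pow_eq_one h1)
    have hgs := geom_sum_mul (a ^ m) ℓ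
    rw [← pow_mul, mul_comm m ℓ, pow_mul, ha1, one_pow, sub_self] at hgs
    rcases mul_eq_zero.mp hgs with h1 | h1
    · simp [hd, h1]
    · exact absurd (sub_eq_zero.mp h1) hne

/-- The punctured invariant subcode of the quasi-cyclic GRS code (orbits under
`z ↦ a·z`, divisor on the orbit of `q`) is the GRS code with support
`i ↦ (x i)^ℓ` and multiplier `i ↦ ((x i)^ℓ - q^ℓ)⁻ᵗ`. -/
theorem invariant_GRS_code_homothety {F : Type*} [Field F] (a : F)
    (ℓ : ℕ) (hℓ : 0 < ℓ) (ha1 : a ^ ℓ = 1)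
    (ha2 : ∀ j : ℕ, 0 < j → j < ℓ → a ^ j ≠ 1) (s t : ℕ) (hts : t < s)
    (x : Fin s → F)
    (hinj : Function.Injective fun p : Fin s × Fin ℓ => a ^ (p.2 : ℕ) * x p.1)
    (q : F) (hq : ∀ i : Fin s, x i ^ ℓ ≠ q ^ ℓ) :
    {v : Fin s → F | ∃ f : F[X], f.natDegree ≤ t * ℓ ∧
        ∀ (i : Fin s) (j : Fin ℓ),
          f.eval (a ^ (j : ℕ) * x i) / (x i ^ ℓ - q ^ ℓ) ^ t = v i} =
      {v : Fin s → F | ∃ g : F[X], g.natDegree ≤ t ∧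
        ∀ i : Fin s, v i = g.eval (x i ^ ℓ) / (x i ^ ℓ - q ^ ℓ) ^ t} := by
  have hℓF : (ℓ : F) ≠ 0 := invGRS_aux_char hℓ ha1 ha2
  have hgeom : ∀ m : ℕ, (∑ j ∈ Finset.range ℓ, (a ^ m) ^ j) = if ℓ ∣ m then (ℓ : F) else 0 :=
    invGRS_aux_geom hℓ ha1 ha2
  have hc : ∀ i : Fin s, (x i ^ ℓ - q ^ ℓ) ^ t ≠ 0 := fun i =>
    pow_ne_zero _ (sub_ne_zero.mpr (hq i))
  ext v
  simp only [Set.mem_setOf_eq]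
  constructor
  · rintro ⟨f, hf, hval⟩
    set g : F[X] := ∑ k ∈ Finset.range (t + 1), C (f.coeff (k * ℓ)) * X ^ k with hg
    refine ⟨g, ?_, ?_⟩
    · refine natDegree_sum_le_of_forall_le _ _ fun k hk => ?_
      exact le_trans ((natDegree_C_mul_le _ _).trans (natDegree_X_pow k).le)
        (Nat.lt_succ_iff.mp (Finset.mem_range.mp hk))
    · intro i
      have hdeg : f.natDegree < t * ℓ + 1 := Nat.lt_succ_of_le hf
      have key : ∑ j ∈ Finset.range ℓ, f.eval (a ^ j * x i) = (ℓ : F) * g.eval (x i ^ ℓ) := by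
        have expand : ∀ j : ℕ, f.eval (a ^ j * x i)
            = ∑ m ∈ Finset.range (t * ℓ + 1), f.coeff m * (a ^ m) ^ j * (x i) ^ m := by
          intro j
          rw [eval_eq_sum_range' hdeg]
          refine Finset.sum_congr rfl fun m _ => ?_
          rw [mul_pow, ← pow_mul, ← pow_mul, mul_comm j m]
          ring
        rw [Finset.sum_congr rfl fun j _ => expand j, Finset.sum_comm]
        have step : ∀ m ∈ Finset.range (t * ℓ + 1),
            (∑ j ∈ Finset.range ℓ, f.coeff m * (a ^ m) ^ j * (x i) ^ m)
            = (if ℓ ∣ m then (ℓ : F) else 0) * (f.coeff m * (x i) ^ m) := by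
          intro m _
          rw [← Finset.sum_mul, ← Finset.mul_sum, hgeom m]
          ring
        rw [Finset.sum_congr rfl step]
        have himg : (Finset.range (t+1)).image (· * ℓ) ⊆ Finset.range (t * ℓ + 1) := by
          intro m hm
          obtain ⟨k, hk, rfl⟩ := Finset.mem_image.mp hm
          have hkt : k ≤ t := Nat.lt_succ_iff.mp (Finset.mem_range.mp hk)
          exact Finset.mem_range.mpr (Nat.lt_succ_of_le (Nat.mul_le_mul_right ℓ hkt))
        have hvan : ∀ m ∈ Finset.range (t * ℓ + 1),
            m ∉ (Finset.range (t+1)).image (· * ℓ) →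
            (if ℓ ∣ m then (ℓ : F) else 0) * (f.coeff m * (x i) ^ m) = 0 := by
          intro m hm hnm
          have : ¬ ℓ ∣ m := by
            rintro ⟨k, rfl⟩
            apply hnm
            refine Finset.mem_image.mpr ⟨k, ?_, mul_comm k ℓ⟩
            rw [Finset.mem_range] at hm ⊢
            rw [mul_comm t ℓ] at hm
            have : ℓ * k ≤ ℓ * t := by omega
            exact Nat.lt_succ_of_le (Nat.le_of_mul_le_mul_left this hℓ)
          simp [this]
        rw [← Finset.sum_subset himg hvan,
          Finset.sum_image (fun x1 _ y1 _ hxy => Nat.eq_of_mul_eq_mul_right hℓ hxy)]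
        have hterm : ∀ k ∈ Finset.range (t+1),
            (if ℓ ∣ k * ℓ then (ℓ : F) else 0) * (f.coeff (k * ℓ) * (x i) ^ (k * ℓ))
            = (ℓ : F) * (f.coeff (k * ℓ) * ((x i) ^ ℓ) ^ k) := by
          intro k _
          rw [if_pos (dvd_mul_left ℓ k), ← pow_mul, mul_comm ℓ k]
        rw [Finset.sum_congr rfl hterm, ← Finset.mul_sum]
        congr 1
        rw [hg, eval_finset_sum]
        exact Finset.sum_congr rfl fun k _ => by simp [eval_mul, eval_pow]
      have hconst : ∀ j ∈ Finset.range ℓ, f.eval (a ^ j * x i) = v i * (x i ^ ℓ - q ^ ℓ) ^ t :=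
        fun j hj => (div_eq_iff (hc i)).mp (hval i ⟨j, Finset.mem_range.mp hj⟩)
      rw [Finset.sum_congr rfl hconst, Finset.sum_const, Finset.card_range, nsmul_eq_mul] at key
      rw [eq_div_iff (hc i)]
      exact mul_left_cancel₀ hℓF key
  · rintro ⟨g, hg, hval⟩
    refine ⟨g.comp (X ^ ℓ), ?_, ?_⟩
    · rw [natDegree_comp, natDegree_X_pow]
      exact Nat.mul_le_mul_right ℓ hg
    · intro i j
      rw [eval_comp, eval_pow, eval_X, mul_pow, ← pow_mul, mul_comm (j:ℕ) ℓ, pow_mul, ha1,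
        one_pow, one_mul]
      exact (hval i).symm
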